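/- arXiv:math/0409087 — 3 statements merged into one kernel-verified Lean document; each statement's English description precedes it below -/
import Mathlib

section
/- There exists a group homomorphism φ: [F₂,F₂] → ℤ, invariant under conjugation by F₂, with φ([x,y]) = -1. Consequently [x,y] is not a product of two squares in F₂ (theorem of Lyndon and Newman). -/
open scoped commutatorElement

/-- The free group on two generators. -/
abbrev F2 : Type := FreeGroup Bool

/-- The first generator. -/
def x : F2 := FreeGroup.of true
/-- The second generator. -/
def y : F2 := FreeGroup.of false

/-- A homomorphism `φ : [F₂,F₂] → ℤ` is invariant under conjugation by `F₂`. -/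
def ConjInvariant (φ : ↥(commutator F2) →* ℤ) : Prop :=
  ∀ (a : F2) (ha : a ∈ commutator F2) (h : F2) (hc : h⁻¹ * a * h ∈ commutator F2),
    φ ⟨h⁻¹ * a * h, hc⟩ = φ ⟨a, ha⟩

lemma commutatorElt_mem : ⁅x, y⁆ ∈ commutator F2 := by
  rw [commutator_def]
  exact Subgroup.commutator_mem_commutator (Subgroup.mem_top _) (Subgroup.mem_top _)

/-- The integral Heisenberg group. -/
@[ext] structure Heis where
  a : ℤ
  b : ℤ
  c : ℤ

namespace Heis

instance : Mul Heis := ⟨fun g h => ⟨g.a + h.a, g.b + h.b, g.c + h.c + g.b * h.a⟩⟩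
instance : One Heis := ⟨⟨0, 0, 0⟩⟩
instance : Inv Heis := ⟨fun g => ⟨-g.a, -g.b, -g.c + g.b * g.a⟩⟩

@[simp] lemma mul_a (g h : Heis) : (g * h).a = g.a + h.a := rfl
@[simp] lemma mul_b (g h : Heis) : (g * h).b = g.b + h.b := rfl
@[simp] lemma mul_c (g h : Heis) : (g * h).c = g.c + h.c + g.b * h.a := rfl
@[simp] lemma one_a : (1 : Heis).a = 0 := rfl
@[simp] lemma one_b : (1 : Heis).b = 0 := rfl
@[simp] lemma one_c : (1 : Heis).c = 0 := rfl
@[simp] lemma inv_a (g : Heis) : g⁻¹.a = -g.a := rfl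
@[simp] lemma inv_b (g : Heis) : g⁻¹.b = -g.b := rfl
@[simp] lemma inv_c (g : Heis) : g⁻¹.c = -g.c + g.b * g.a := rfl

instance : Group Heis where
  mul_assoc g h k := by ext <;> simp <;> ring
  one_mul g := by ext <;> simp
  mul_one g := by ext <;> simp
  inv_mul_cancel g := by ext <;> simp <;> ring

/-- Conjugation fixes central elements. -/
lemma central_conj (z u : Heis) (ha : z.a = 0) (hb : z.b = 0) : u⁻¹ * z * u = z := by
  ext <;> simp [ha, hb] <;> ring

end Heis

/-- The homomorphism `F₂ → Heis`. -/
noncomputable def ψ : F2 →* Heis :=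
  FreeGroup.lift (fun b => if b then ⟨1, 0, 0⟩ else ⟨0, 1, 0⟩)

@[simp] lemma ψ_x : ψ x = ⟨1, 0, 0⟩ := by simp [ψ, x]
@[simp] lemma ψ_y : ψ y = ⟨0, 1, 0⟩ := by simp [ψ, y]

/-- `a`-coordinate as a hom to `Multiplicative ℤ`. -/
noncomputable def ψa : F2 →* Multiplicative ℤ :=
  { toFun := fun g => Multiplicative.ofAdd (ψ g).a
    map_one' := by simp
    map_mul' := fun g h => by simp [← ofAdd_add] }

noncomputable def ψb : F2 →* Multiplicative ℤ :=
  { toFun := fun g => Multiplicative.ofAdd (ψ g).b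
    map_one' := by simp
    map_mul' := fun g h => by simp [← ofAdd_add] }

lemma mem_comm_a {g : F2} (hg : g ∈ commutator F2) : (ψ g).a = 0 := by
  have := Abelianization.commutator_subset_ker ψa hg
  rw [MonoidHom.mem_ker] at this
  simpa [ψa] using congrArg Multiplicative.toAdd this

lemma mem_comm_b {g : F2} (hg : g ∈ commutator F2) : (ψ g).b = 0 := by
  have := Abelianization.commutator_subset_ker ψb hg
  rw [MonoidHom.mem_ker] at this
  simpa [ψb] using congrArg Multiplicative.toAdd this

/-- The conjugation-invariant homomorphism on the commutator subgroup: the sign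
`(-1) ^ c`-coordinate of the Heisenberg representation. -/
noncomputable def φ : ↥(commutator F2) →* ℤ :=
  { toFun := fun g => (((-1 : ℤˣ) ^ (ψ (g : F2)).c : ℤˣ) : ℤ)
    map_one' := by simp
    map_mul' := fun g h => by
      have hb := mem_comm_b g.2
      have : (ψ ((g : F2) * (h : F2))).c = (ψ (g : F2)).c + (ψ (h : F2)).c := by
        simp [hb]
      push_cast [this, zpow_add]
      rfl }

lemma φ_apply (g : ↥(commutator F2)) : φ g = (((-1 : ℤˣ) ^ (ψ (g : F2)).c : ℤˣ) : ℤ) := rfl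

lemma φ_conjInvariant : ConjInvariant φ := by
  intro a ha h hc
  rw [φ_apply, φ_apply]
  have : ψ (h⁻¹ * a * h) = ψ a := by
    rw [map_mul, map_mul, map_inv]
    exact Heis.central_conj (ψ a) (ψ h) (mem_comm_a ha) (mem_comm_b ha)
  simp [this]

lemma ψ_comm_c : (ψ ⁅x, y⁆).c = -1 := by
  rw [commutatorElement_def]
  simp

lemma φ_comm : φ ⟨⁅x, y⁆, commutatorElt_mem⟩ = -1 := by
  rw [φ_apply]
  simp only [ψ_comm_c]
  simp

/-- Exponent-sum homomorphisms. -/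
noncomputable def Ex : F2 →* Multiplicative ℤ :=
  FreeGroup.lift (fun b => Multiplicative.ofAdd (if b then 1 else 0))
noncomputable def Ey : F2 →* Multiplicative ℤ :=
  FreeGroup.lift (fun b => Multiplicative.ofAdd (if b then 0 else 1))

lemma abel_eq (w : F2) :
    Abelianization.of w = (Abelianization.of x) ^ (Multiplicative.toAdd (Ex w)) *
      (Abelianization.of y) ^ (Multiplicative.toAdd (Ey w)) := by
  induction w using FreeGroup.induction_on with
  | C1 => simp
  | of b =>
    have hp : ∀ c : Bool, (pure c : F2) = FreeGroup.of c := fun _ => rfl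
    cases b <;> simp [Ex, Ey, x, y, hp]
  | inv_of b ih =>
    rw [map_inv, ih, map_inv (f := Ex), map_inv (f := Ey), toAdd_inv, toAdd_inv,
      zpow_neg, zpow_neg, mul_inv]
  | mul u v ihu ihv =>
    rw [map_mul, ihu, ihv, map_mul (f := Ex), map_mul (f := Ey), toAdd_mul, toAdd_mul,
      zpow_add, zpow_add, mul_mul_mul_comm]

lemma mem_commutator_of (w : F2) (hx : Ex w = 1) (hy : Ey w = 1) : w ∈ commutator F2 := by
  have h1 : Abelianization.of w = 1 := by
    rw [abel_eq w, hx, hy]; simp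
  rwa [← QuotientGroup.eq_one_iff w]

/-- There is a conjugation-invariant homomorphism `φ : [F₂,F₂] → ℤ` with `φ ⁅x,y⁆ = -1`;
consequently `⁅x,y⁆` is not a product of two squares (Lyndon–Newman). -/
theorem exists_conjInvariant_hom_and_commutator_not_prod_two_squares :
    (∃ φ : ↥(commutator F2) →* ℤ, ConjInvariant φ ∧ φ ⟨⁅x, y⁆, commutatorElt_mem⟩ = -1) ∧
      ¬ ∃ a b : F2, ⁅x, y⁆ = a ^ 2 * b ^ 2 := by
  refine ⟨⟨φ, φ_conjInvariant, φ_comm⟩, ?_⟩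
  rintro ⟨a, b, hab⟩
  have exps : ∀ E : F2 →* Multiplicative ℤ, E (a * b) = 1 := by
    intro E
    have h0 : E ⁅x, y⁆ = 1 := by
      rw [map_commutatorElement]
      exact commutatorElement_eq_one_iff_mul_comm.mpr (mul_comm _ _)
    rw [hab] at h0
    have h2 : Multiplicative.toAdd (E a) + Multiplicative.toAdd (E a) +
        (Multiplicative.toAdd (E b) + Multiplicative.toAdd (E b)) = 0 := by
      simpa [pow_two] using congrArg Multiplicative.toAdd h0
    have h3 : Multiplicative.toAdd (E (a * b)) = 0 := by
      rw [map_mul, toAdd_mul]; omega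
    have := congrArg Multiplicative.ofAdd h3
    simpa using this
  have hu : a * b ∈ commutator F2 := mem_commutator_of _ (exps Ex) (exps Ey)
  have hmem : a⁻¹⁻¹ * (a * b) * a⁻¹ ∈ commutator F2 := by
    rw [inv_inv]
    exact Subgroup.Normal.conj_mem inferInstance _ hu a
  have hci := φ_conjInvariant (a * b) hu a⁻¹ hmem
  have key : (⟨⁅x, y⁆, commutatorElt_mem⟩ : ↥(commutator F2)) =
      ⟨a⁻¹⁻¹ * (a * b) * a⁻¹, hmem⟩ * ⟨a * b, hu⟩ := by
    ext
    show ⁅x, y⁆ = a⁻¹⁻¹ * (a * b) * a⁻¹ * (a * b)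
    rw [hab, pow_two, pow_two]; group
  have := φ_comm
  rw [key, map_mul, hci] at this
  nlinarith [this]
end

section
/- If m is an even integer, then in the free group F₂ = ⟨x,y⟩, the identity [xᵐ, yⁿ] = (x^{m/2})² · (yⁿ x^{-m/2} y^{-n})² holds; in particular [xᵐ, yⁿ] is a product of two squares. -/
open scoped commutatorElement

/-- If `m` is even then `⁅xᵐ, yⁿ⁆ = (x^(m/2))² * (yⁿ * x^(-m/2) * y⁻ⁿ)²`; in particular
`⁅xᵐ, yⁿ⁆` is a product of two squares. -/
theorem commutator_eq_two_squares_of_even (m n : ℤ) (hm : Even m) :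
    ⁅x ^ m, y ^ n⁆ = (x ^ (m / 2)) ^ 2 * (y ^ n * x ^ (-(m / 2)) * y ^ (-n)) ^ 2 ∧
      ∃ a b : F2, ⁅x ^ m, y ^ n⁆ = a ^ 2 * b ^ 2 := by
  obtain ⟨k, hk⟩ := hm
  have hdiv : m / 2 = k := by omega
  subst hk
  rw [hdiv]
  have key : ⁅x ^ (k + k), y ^ n⁆ = (x ^ k) ^ 2 * (y ^ n * x ^ (-k) * y ^ (-n)) ^ 2 := by
    rw [commutatorElement_def, sq, sq]
    group
  exact ⟨key, _, _, key⟩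
end

section
/- For each k ≥ 2 there exists an element g of the commutator subgroup [F₂,F₂] whose image in H₁ of the universal abelian cover has P-coordinate P(x,y) = −(y−1)ᵏ and Q-coordinate Q(x,y) = (y−1)^{k−1}(x−1); for such g, φⱼ(g) = 0 for all j < k, φₖ(g) = −1, and ψⱼ(g) = 0 for all j, where φⱼ(α) = f⁽ʲ⁾(1)/j! with f(y) = P(1,y) and ψⱼ(α) = g⁽ʲ⁾(1)/j! with g(x) = Q(x,1). -/
/-- The Laurent polynomial ring `ℤ[x^{±1}, y^{±1}]`, as the group algebra `ℤ[ℤ²]`. -/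
abbrev R2 : Type := AddMonoidAlgebra ℤ (ℤ × ℤ)

/-- The monomial `x^{a.1} y^{a.2}`. -/
noncomputable def mono (a : ℤ × ℤ) : R2 := AddMonoidAlgebra.single a 1

/-- The variable `x`. -/
noncomputable def X : R2 := mono (1, 0)
/-- The variable `y`. -/
noncomputable def Y : R2 := mono (0, 1)

lemma mono_add (a b : ℤ × ℤ) : mono (a + b) = mono a * mono b := by
  simp [mono, AddMonoidAlgebra.single_mul_single]

lemma mono_zero : mono 0 = 1 := rfl

/-- Data of the lift of a loop to the universal abelian cover of the wedge of two
circles: the endpoint (= abelianized image) together with the 1-chain `P·X + Q·Y`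
(the coefficients are the abelianized Fox derivatives). -/
structure FoxData where
  ab : ℤ × ℤ
  P : R2
  Q : R2

noncomputable instance : Mul FoxData :=
  ⟨fun u v => ⟨u.ab + v.ab, u.P + mono u.ab * v.P, u.Q + mono u.ab * v.Q⟩⟩
noncomputable instance : One FoxData := ⟨⟨0, 0, 0⟩⟩
noncomputable instance : Inv FoxData :=
  ⟨fun u => ⟨-u.ab, -(mono (-u.ab) * u.P), -(mono (-u.ab) * u.Q)⟩⟩

@[simp] lemma mul_ab (u v : FoxData) : (u * v).ab = u.ab + v.ab := rfl
@[simp] lemma mul_P (u v : FoxData) : (u * v).P = u.P + mono u.ab * v.P := rfl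
@[simp] lemma mul_Q (u v : FoxData) : (u * v).Q = u.Q + mono u.ab * v.Q := rfl
@[simp] lemma one_ab : (1 : FoxData).ab = 0 := rfl
@[simp] lemma one_P : (1 : FoxData).P = 0 := rfl
@[simp] lemma one_Q : (1 : FoxData).Q = 0 := rfl
@[simp] lemma inv_ab (u : FoxData) : u⁻¹.ab = -u.ab := rfl
@[simp] lemma inv_P (u : FoxData) : u⁻¹.P = -(mono (-u.ab) * u.P) := rfl
@[simp] lemma inv_Q (u : FoxData) : u⁻¹.Q = -(mono (-u.ab) * u.Q) := rfl

lemma FoxData.ext' {u v : FoxData} (h1 : u.ab = v.ab) (h2 : u.P = v.P) (h3 : u.Q = v.Q) :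
    u = v := by cases u; cases v; simp_all

noncomputable instance : Group FoxData where
  mul_assoc u v w := FoxData.ext' (by simp [add_assoc]) (by simp [mono_add]; ring)
    (by simp [mono_add]; ring)
  one_mul u := FoxData.ext' (by simp) (by simp [mono_zero]) (by simp [mono_zero])
  mul_one u := FoxData.ext' (by simp) (by simp) (by simp)
  inv_mul_cancel u := FoxData.ext' (by simp) (by simp [← mono_add]) (by simp [← mono_add])

/-- The homomorphism computing the lift of a loop to the universal abelian cover:
`(D g).P` and `(D g).Q` are the coefficients of the lifted 1-chain of `g`
(for `g ∈ [F₂,F₂]` this chain is a 1-cycle, the homology class of `g`). -/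
noncomputable def D : F2 →* FoxData :=
  FreeGroup.lift fun b => if b then ⟨(1, 0), 1, 0⟩ else ⟨(0, 1), 0, 1⟩

/-- `φₖ(P) = f⁽ᵏ⁾(1)/k!` where `f(y) = P(1,y)`: in terms of coefficients,
`φₖ(P) = Σ_{(i,j)} C(j,k) · P_{(i,j)}` (generalized binomial coefficients). -/
noncomputable def phi (k : ℕ) (P : R2) : ℤ := P.coeff.sum fun a c => Ring.choose a.2 k * c
/-- `ψₖ(Q) = g⁽ᵏ⁾(1)/k!` where `g(x) = Q(x,1)`. -/
noncomputable def psi (k : ℕ) (Q : R2) : ℤ := Q.coeff.sum fun a c => Ring.choose a.1 k * c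

open scoped commutatorElement

lemma Dx : D x = ⟨(1,0), 1, 0⟩ := FreeGroup.lift_apply_of
lemma Dy : D y = ⟨(0,1), 0, 1⟩ := FreeGroup.lift_apply_of


lemma Dcomm : D ⁅x,y⁆ = ⟨0, -(Y-1)^1, (Y-1)^0 * (X-1)⟩ := by
  rw [commutatorElement_def]
  refine FoxData.ext' ?_ ?_ ?_ <;>
    simp only [map_mul, map_inv, Dx, Dy, mul_ab, mul_P, mul_Q, inv_ab, inv_P, inv_Q,
      mul_zero, mul_one, zero_add, add_zero, neg_zero, mono_add]
  · decide
  · have h : ((1,0):ℤ×ℤ) + (0,1) + -(1,0) = (0,1) := by decide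
    rw [mul_neg, ← mono_add, ← mono_add, h]
    show 1 + -Y = -(Y-1)^1
    ring
  · have h : ((1,0):ℤ×ℤ) + (0,1) + -(1,0) + -(0,1) = 0 := by decide
    rw [mul_neg, ← mono_add, ← mono_add, ← mono_add, h, mono_zero]
    show X + -1 = (Y-1)^0 * (X-1)
    ring

lemma Dstep (g : F2) (h : (D g).ab = 0) :
    D ⁅y, g⁆ = ⟨0, (Y-1) * (D g).P, (Y-1) * (D g).Q⟩ := by
  rw [commutatorElement_def]
  refine FoxData.ext' ?_ ?_ ?_ <;>
    simp only [map_mul, map_inv, Dy, mul_ab, mul_P, mul_Q, inv_ab, inv_P, inv_Q, h,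
      mul_zero, mul_one, zero_add, add_zero, neg_zero, neg_neg, mono_add, mono_zero, one_mul]
  · decide
  · have e : mono ((0,1):ℤ×ℤ) * mono (-(0,1)) = 1 := by
      rw [← mono_add]; norm_num [mono_zero]; exact mono_zero
    rw [e]
    show Y * (D g).P + 1 * -(D g).P = (Y-1) * (D g).P
    ring
  · have e : mono ((0,1):ℤ×ℤ) * mono (-(0,1)) = 1 := by
      rw [← mono_add]; norm_num [mono_zero]; exact mono_zero
    rw [mul_neg, e]
    show 1 + Y * (D g).Q + -1 + 1 * -(D g).Q = (Y-1) * (D g).Q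
    ring

noncomputable def gseq : ℕ → F2
  | 0 => ⁅x, y⁆
  | (n+1) => ⁅y, gseq n⁆

lemma gseq_mem (n : ℕ) : gseq n ∈ commutator F2 := by
  cases n <;>
    exact Subgroup.commutator_mem_commutator (Subgroup.mem_top _) (Subgroup.mem_top _)

lemma gseq_spec : ∀ n : ℕ, (D (gseq n)).ab = 0 ∧ (D (gseq n)).P = -(Y - 1) ^ (n+1) ∧
    (D (gseq n)).Q = (Y - 1) ^ n * (X - 1) := by
  intro n
  induction n with
  | zero => rw [show gseq 0 = ⁅x,y⁆ from rfl, Dcomm]; exact ⟨rfl, rfl, rfl⟩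
  | succ m ih =>
      obtain ⟨hab, hP, hQ⟩ := ih
      rw [show gseq (m+1) = ⁅y, gseq m⁆ from rfl, Dstep _ hab, hP, hQ]
      refine ⟨rfl, ?_, ?_⟩ <;> simp <;> ring

-- phi/psi lemmas
lemma phi_zero (j : ℕ) : phi j 0 = 0 := by unfold phi; exact Finsupp.sum_zero_index
lemma phi_add (j : ℕ) (P Q : R2) : phi j (P + Q) = phi j P + phi j Q := by
  unfold phi; rw [AddMonoidAlgebra.coeff_add]; exact Finsupp.sum_add_index' (by simp) (by intros; ring)
lemma phi_single (j : ℕ) (a : ℤ × ℤ) (c : ℤ) :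
    phi j (AddMonoidAlgebra.single a c) = Ring.choose a.2 j * c := by
  unfold phi; rw [AddMonoidAlgebra.coeff_single]; exact Finsupp.sum_single_index (by simp)
lemma phi_neg (j : ℕ) (P : R2) : phi j (-P) = -phi j P := by
  have := phi_add j P (-P); simp [phi_zero] at this; linarith
lemma phi_sub (j : ℕ) (P Q : R2) : phi j (P - Q) = phi j P - phi j Q := by
  rw [sub_eq_add_neg, phi_add, phi_neg]; ring

lemma phi_Y_mul_succ (j : ℕ) (P : R2) : phi (j+1) (Y * P) = phi (j+1) P + phi j P := by
  induction P using AddMonoidAlgebra.induction_linear with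
  | zero => simp [phi_zero]
  | add f g hf hg => rw [mul_add, phi_add, phi_add, phi_add, hf, hg]; ring
  | single a c =>
      rw [show Y * AddMonoidAlgebra.single a c = AddMonoidAlgebra.single ((0,1)+a) (1*c) from
        AddMonoidAlgebra.single_mul_single .., phi_single, phi_single, phi_single]
      have : (((0,1) : ℤ × ℤ) + a).2 = a.2 + 1 := by simp [add_comm]
      rw [this, Ring.choose_succ_succ]; ring

lemma phi_Y_mul_zero (P : R2) : phi 0 (Y * P) = phi 0 P := by
  induction P using AddMonoidAlgebra.induction_linear with
  | zero => simp [phi_zero]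
  | add f g hf hg => rw [mul_add, phi_add, phi_add, hf, hg]
  | single a c =>
      rw [show Y * AddMonoidAlgebra.single a c = AddMonoidAlgebra.single ((0,1)+a) (1*c) from
        AddMonoidAlgebra.single_mul_single .., phi_single, phi_single]
      simp [Ring.choose_zero_right]

lemma phi_Ysub_zero (P : R2) : phi 0 ((Y - 1) * P) = 0 := by
  rw [sub_mul, one_mul, phi_sub, phi_Y_mul_zero, sub_self]
lemma phi_Ysub_succ (j : ℕ) (P : R2) : phi (j+1) ((Y - 1) * P) = phi j P := by
  rw [sub_mul, one_mul, phi_sub, phi_Y_mul_succ]; ring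

lemma phi_one (j : ℕ) : phi j (1 : R2) = if j = 0 then 1 else 0 := by
  rw [show (1 : R2) = AddMonoidAlgebra.single 0 1 from rfl, phi_single]
  simp [Ring.choose_zero_ite]

lemma phi_pow_lt : ∀ k j : ℕ, j < k → phi j ((Y - 1) ^ k) = 0 := by
  intro k
  induction k with
  | zero => omega
  | succ n ih =>
      intro j hj
      rw [pow_succ']
      cases j with
      | zero => exact phi_Ysub_zero _
      | succ m => rw [phi_Ysub_succ]; exact ih m (by omega)

lemma phi_pow_self : ∀ k : ℕ, phi k ((Y - 1) ^ k) = 1 := by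
  intro k
  induction k with
  | zero => simp [phi_one]
  | succ n ih => rw [pow_succ', phi_Ysub_succ, ih]

lemma psi_zero (j : ℕ) : psi j 0 = 0 := by unfold psi; exact Finsupp.sum_zero_index
lemma psi_add (j : ℕ) (P Q : R2) : psi j (P + Q) = psi j P + psi j Q := by
  unfold psi; rw [AddMonoidAlgebra.coeff_add]; exact Finsupp.sum_add_index' (by simp) (by intros; ring)
lemma psi_single (j : ℕ) (a : ℤ × ℤ) (c : ℤ) :
    psi j (AddMonoidAlgebra.single a c) = Ring.choose a.1 j * c := by
  unfold psi; rw [AddMonoidAlgebra.coeff_single]; exact Finsupp.sum_single_index (by simp)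
lemma psi_Y_mul (j : ℕ) (P : R2) : psi j (Y * P) = psi j P := by
  induction P using AddMonoidAlgebra.induction_linear with
  | zero => simp [psi_zero]
  | add f g hf hg => rw [mul_add, psi_add, psi_add, hf, hg]
  | single a c =>
      rw [show Y * AddMonoidAlgebra.single a c = AddMonoidAlgebra.single ((0,1)+a) (1*c) from
        AddMonoidAlgebra.single_mul_single .., psi_single, psi_single]
      simp

lemma psi_Ysub (j : ℕ) (P : R2) : psi j ((Y - 1) * P) = 0 := by
  have h := psi_add j (Y * P) (-P)
  rw [sub_mul, one_mul, sub_eq_add_neg, h, psi_Y_mul]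
  have h2 := psi_add j P (-P)
  simp [psi_zero] at h2
  omega

/-- For each `k ≥ 2` there is a `g ∈ [F₂,F₂]` whose homology class in the universal
abelian cover has `P = -(y-1)ᵏ` and `Q = (y-1)^{k-1}(x-1)`; any such `g` satisfies
`φⱼ(g) = 0` for `j < k`, `φₖ(g) = -1`, and `ψⱼ(g) = 0` for all `j`. -/
theorem exists_elt_with_vanishing_phi (k : ℕ) (hk : 2 ≤ k) :
    (∃ g : F2, g ∈ commutator F2 ∧
        (D g).P = -(Y - 1) ^ k ∧ (D g).Q = (Y - 1) ^ (k - 1) * (X - 1)) ∧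
      ∀ g : F2, g ∈ commutator F2 →
        (D g).P = -(Y - 1) ^ k → (D g).Q = (Y - 1) ^ (k - 1) * (X - 1) →
          (∀ j < k, phi j (D g).P = 0) ∧ phi k (D g).P = -1 ∧
            ∀ j : ℕ, psi j (D g).Q = 0 := by
  constructor
  · refine ⟨gseq (k-1), gseq_mem _, ?_, ?_⟩
    · rw [(gseq_spec (k-1)).2.1, show k - 1 + 1 = k from by omega]
    · exact (gseq_spec (k-1)).2.2
  · intro g _ hP hQ
    refine ⟨?_, ?_, ?_⟩
    · intro j hj
      rw [hP, phi_neg, phi_pow_lt k j hj, neg_zero]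
    · rw [hP, phi_neg, phi_pow_self]
    · intro j
      obtain ⟨m, hm⟩ : ∃ m, k - 1 = m + 1 := ⟨k - 2, by omega⟩
      rw [hQ, hm, pow_succ', mul_assoc, psi_Ysub]
end
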